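/- Let G be a topological group and let S be a dense subgroup of G. Then for every natural number n, the n-th derived subgroup D^n(G) of G is contained in the topological closure of the image of the n-th derived subgroup D^n(S) of S in G. -/

import Mathlib

open scoped commutatorElement in
lemma commutator_closure_le {G : Type*} [Group G] [TopologicalSpace G] [IsTopologicalGroup G]
    (H K : Subgroup G) :
    ⁅H.topologicalClosure, K.topologicalClosure⁆ ≤ ⁅H, K⁆.topologicalClosure := by
  set C := ⁅H, K⁆.topologicalClosure
  have hCclosed : IsClosed (C : Set G) := Subgroup.isClosed_topologicalClosure _
  have step1 : ∀ h ∈ K, ∀ g ∈ H.topologicalClosure, ⁅g, h⁆ ∈ C := by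
    intro h hh g hg
    have hcont : Continuous fun g : G => ⁅g, h⁆ := by
      simp only [commutatorElement_def]
      fun_prop
    have : (H : Set G) ⊆ (fun g : G => ⁅g, h⁆) ⁻¹' (C : Set G) := fun x hx =>
      Subgroup.le_topologicalClosure _ (Subgroup.commutator_mem_commutator hx hh)
    have hsub := closure_minimal this (hCclosed.preimage hcont)
    exact hsub hg
  refine Subgroup.commutator_le.2 (fun g hg h hh => ?_)
  have hcont : Continuous fun h : G => ⁅g, h⁆ := by
    simp only [commutatorElement_def]
    fun_prop
  have : (K : Set G) ⊆ (fun h : G => ⁅g, h⁆) ⁻¹' (C : Set G) := fun y hy =>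
    step1 y hy g hg
  exact closure_minimal this (hCclosed.preimage hcont) hh

/-- Let `G` be a topological group and `S` a dense subgroup of `G`. Then for every `n`,
the `n`-th derived subgroup `D^n(G)` of `G` is contained in the topological closure of
the image in `G` of the `n`-th derived subgroup `D^n(S)` of `S`. -/
theorem derivedSeries_le_closure_map_derivedSeries_of_dense
    {G : Type*} [Group G] [TopologicalSpace G] [IsTopologicalGroup G]
    (S : Subgroup G) (hS : Dense (S : Set G)) (n : ℕ) :
    derivedSeries G n ≤ ((derivedSeries S n).map S.subtype).topologicalClosure := by
  induction n with
  | zero =>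
    intro x _
    have h1 : (derivedSeries S 0).map S.subtype = S := by
      rw [derivedSeries_zero, ← MonoidHom.range_eq_map, Subgroup.range_subtype]
    rw [h1]
    show x ∈ closure (S : Set G)
    rw [hS.closure_eq]
    trivial
  | succ n ih =>
    calc derivedSeries G (n + 1) = ⁅derivedSeries G n, derivedSeries G n⁆ := rfl
      _ ≤ ⁅((derivedSeries S n).map S.subtype).topologicalClosure,
            ((derivedSeries S n).map S.subtype).topologicalClosure⁆ :=
        Subgroup.commutator_mono ih ih
      _ ≤ ⁅(derivedSeries S n).map S.subtype,
            (derivedSeries S n).map S.subtype⁆.topologicalClosure :=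
        commutator_closure_le _ _
      _ = ((derivedSeries S (n + 1)).map S.subtype).topologicalClosure := by
        rw [derivedSeries_succ, Subgroup.map_commutator]
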